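/- Let P be a c-regular cd-structure on a category 𝒳. Then for every distinguished square of P with corners B, A, Y, X, the natural morphism ρ(A) ⊔_{ρ(B)} ρ(Y) → ρ(X) is an isomorphism in the category of τ_P^c-sheaves of sets. -/

import Mathlib

open CategoryTheory Limits Opposite

universe w v u

namespace CdFormal

variable {C : Type u} [Category.{v} C] {D : Type w} [Category.{v} D]

/-- A commutative square in `C`: `B → Y`, `B → A`, `p : Y → X`, `i : A → X`. -/
structure CDSquare (C : Type u) [Category.{v} C] where
  B : C
  A : C
  Y : C
  X : C
  e : B ⟶ A
  q : B ⟶ Y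
  i : A ⟶ X
  p : Y ⟶ X
  w : q ≫ p = e ≫ i

/-- The sieve on `X` generated by the feet `{i, p}` of a square. -/
def CDSquare.sieve (Q : CDSquare C) : Sieve Q.X where
  arrows Z g := (∃ h : Z ⟶ Q.A, g = h ≫ Q.i) ∨ (∃ h : Z ⟶ Q.Y, g = h ≫ Q.p)
  downward_closed := by
    rintro Z Z' g (⟨h, rfl⟩ | ⟨h, rfl⟩) g'
    · exact Or.inl ⟨g' ≫ h, by simp⟩
    · exact Or.inr ⟨g' ≫ h, by simp⟩

/-- The c-topology associated to a cd-structure `P`: the coarsest Grothendieck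
topology for which the sieve generated by the feet of each distinguished square is covering. -/
def cTopology (P : Set (CDSquare C)) : GrothendieckTopology C :=
  sInf {J | ∀ Q ∈ P, Q.sieve ∈ J Q.X}

/-- The class of simple `P`-covers. -/
inductive IsSimpleCover (P : Set (CDSquare C)) : (X : C) → Presieve X → Prop
  | iso {X' X : C} (f : X' ⟶ X) (hf : IsIso f) : IsSimpleCover P X (Presieve.singleton f)
  | glue (Q : CDSquare C) (hQ : Q ∈ P) (RY : Presieve Q.Y) (RA : Presieve Q.A)
      (hY : IsSimpleCover P Q.Y RY) (hA : IsSimpleCover P Q.A RA) :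
      IsSimpleCover P Q.X (fun Z g =>
        (∃ h : Z ⟶ Q.Y, RY h ∧ g = h ≫ Q.p) ∨ (∃ h : Z ⟶ Q.A, RA h ∧ g = h ≫ Q.i))

/-- `P` is c-complete: every covering sieve for the associated c-topology contains a
simple `P`-cover. -/
def IsCComplete (P : Set (CDSquare C)) : Prop :=
  ∀ ⦃X : C⦄ (S : Sieve X), S ∈ cTopology P X →
    ∃ R : Presieve X, IsSimpleCover P X R ∧ ∀ ⦃Z⦄ (g : Z ⟶ X), R g → S g

/-- `ρ(X)`: the sheafification of the presheaf represented by `X`. -/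
noncomputable def rho (J : GrothendieckTopology C) (X : C) : Sheaf J (Type (max u v)) :=
  (presheafToSheaf J _).obj (yoneda.obj X ⋙ uliftFunctor.{u})

/-- Functoriality of `ρ`. -/
noncomputable def rhoMap (J : GrothendieckTopology C) {X Y : C} (f : X ⟶ Y) :
    rho J X ⟶ rho J Y :=
  (presheafToSheaf J _).map (Functor.whiskerRight (yoneda.map f) uliftFunctor.{u})

lemma rhoMap_comp (J : GrothendieckTopology C) {X Y Z : C} (f : X ⟶ Y) (g : Y ⟶ Z) :
    rhoMap J (f ≫ g) = rhoMap J f ≫ rhoMap J g := by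
  simp only [rhoMap, Functor.map_comp, Functor.whiskerRight_comp]
  exact rfl

instance sheafHasColimitsOfShapeWalkingPair (J : GrothendieckTopology C) :
    HasColimitsOfShape (Discrete WalkingPair) (Sheaf J (Type (max u v))) :=
  Sheaf.instHasColimitsOfShape (J := J) (D := Type (max u v)) (K := Discrete WalkingPair)

/-- The canonical comparison morphism
`ρ(Y) ⊔ (ρ(B) ×_{ρ(A)} ρ(B)) ⟶ ρ(Y) ×_{ρ(X)} ρ(Y)` associated to a square. -/
noncomputable def regCompare (J : GrothendieckTopology C) (Q : CDSquare C) :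
    (rho J Q.Y) ⨿ (pullback (rhoMap J Q.e) (rhoMap J Q.e)) ⟶
      pullback (rhoMap J Q.p) (rhoMap J Q.p) :=
  coprod.desc (pullback.lift (𝟙 _) (𝟙 _) rfl)
    (pullback.lift (pullback.fst _ _ ≫ rhoMap J Q.q) (pullback.snd _ _ ≫ rhoMap J Q.q)
      (by
        rw [Category.assoc, Category.assoc, ← rhoMap_comp, Q.w, rhoMap_comp,
          ← Category.assoc, ← Category.assoc, pullback.condition]))

/-- `P` is c-regular. -/
def IsCRegular (P : Set (CDSquare C)) : Prop :=
  ∀ Q ∈ P, IsPullback Q.q Q.e Q.p Q.i ∧ Mono Q.i ∧ Epi (regCompare (cTopology P) Q)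

/-- The image of a square under a functor. -/
@[simps]
def CDSquare.map (F : C ⥤ D) (Q : CDSquare C) : CDSquare D where
  B := F.obj Q.B
  A := F.obj Q.A
  Y := F.obj Q.Y
  X := F.obj Q.X
  e := F.map Q.e
  q := F.map Q.q
  i := F.map Q.i
  p := F.map Q.p
  w := by rw [← F.map_comp, ← F.map_comp, Q.w]

/-- The induced cd-structure on a slice category. -/
def sliceCd (P : Set (CDSquare C)) (X : C) : Set (CDSquare (Over X)) :=
  {Q | Q.map (Over.forget X) ∈ P}

/-- A dimension function on a category: an initial object `empty` together with a
dimension taking the minimal value `bot` exactly on objects isomorphic to `empty`. -/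
structure DimensionFunction (C : Type u) [Category.{v} C] (Λ : Type w) [Preorder Λ] where
  empty : C
  init : Nonempty (IsInitial empty)
  dim : C → Λ
  bot : Λ
  bot_le : ∀ X : C, bot ≤ dim X
  dim_eq_bot_iff : ∀ X : C, dim X = bot ↔ Nonempty (X ≅ empty)

/-- A cd-structure is compatible with a dimension function. -/
def CompatibleWithDim {Λ : Type w} [Preorder Λ] (P : Set (CDSquare C))
    (Dm : DimensionFunction C Λ) : Prop :=
  ∃ P' : Set (CDSquare C), P' ⊆ P ∧
    (∀ Q ∈ P', Dm.dim Q.A ≤ Dm.dim Q.X ∧ Dm.dim Q.Y ≤ Dm.dim Q.X ∧ Dm.dim Q.B < Dm.dim Q.X) ∧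
    ∀ Q ∈ P, ∃ R : Presieve Q.X, IsSimpleCover P' Q.X R ∧
      ∀ ⦃Z⦄ (g : Z ⟶ Q.X), R g → Q.sieve g

end CdFormal


namespace CdFormal

section Auxiliary

variable {C : Type u} [Category.{v} C]

lemma mem_cTopology (P : Set (CDSquare C)) {Q : CDSquare C} (hQ : Q ∈ P) :
    Q.sieve ∈ cTopology P Q.X := by
  rw [cTopology, GrothendieckTopology.mem_sInf]
  exact fun t ht => ht Q hQ

/-- Element-wise description of a pullback square of types. -/
lemma isPullback_exists {X Y Z W : Type w} {fst : X ⟶ Y} {snd : X ⟶ Z} {f : Y ⟶ W} {g : Z ⟶ W}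
    (h : IsPullback fst snd f g) (y : Y) (z : Z) (hyz : f y = g z) :
    ∃ x : X, fst x = y ∧ snd x = z := by
  have hc : TypeCat.ofHom (fun _ : PUnit.{w + 1} => y) ≫ f
      = TypeCat.ofHom (fun _ : PUnit.{w + 1} => z) ≫ g := by
    ext u
    exact hyz
  exact ⟨h.lift _ _ hc PUnit.unit,
    congrArg (fun φ => φ PUnit.unit)
      (h.lift_fst (TypeCat.ofHom (fun _ : PUnit.{w + 1} => y)) (TypeCat.ofHom fun _ => z) hc),
    congrArg (fun φ => φ PUnit.unit)
      (h.lift_snd (TypeCat.ofHom (fun _ : PUnit.{w + 1} => y)) (TypeCat.ofHom fun _ => z) hc)⟩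

/-- Evaluation of sheaves at an object, as a functor to types. -/
noncomputable abbrev evSh (J : GrothendieckTopology C) (o : Cᵒᵖ) :
    Sheaf J (Type (max u v)) ⥤ Type (max u v) :=
  sheafToPresheaf J _ ⋙ (evaluation Cᵒᵖ (Type (max u v))).obj o

/-- Element-wise description of a pullback square of sheaves of types. -/
lemma sheaf_isPullback_exists {J : GrothendieckTopology C}
    {R S T W : Sheaf J (Type (max u v))} {fst : R ⟶ T} {snd : R ⟶ S}
    {f : T ⟶ W} {g : S ⟶ W} (h : IsPullback fst snd f g) (o : Cᵒᵖ)
    (t : T.val.obj o) (s : S.val.obj o) (hts : f.hom.app o t = g.hom.app o s) :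
    ∃ r : R.val.obj o, fst.hom.app o r = t ∧ snd.hom.app o r = s := by
  have h' := h.map (evSh J o)
  exact isPullback_exists h' t s hts

/-- `ρ` as a functor. -/
noncomputable abbrev rhoFunctor (J : GrothendieckTopology C) : C ⥤ Sheaf J (Type (max u v)) :=
  yoneda ⋙ (Functor.whiskeringRight Cᵒᵖ (Type v) (Type (max u v))).obj uliftFunctor.{u} ⋙
    presheafToSheaf J _

/-- `ρ` sends pullback squares in `C` to pullback squares of sheaves. -/
lemma rho_map_isPullback {J : GrothendieckTopology C} {B A Y X : C}
    {e : B ⟶ A} {q : B ⟶ Y} {i : A ⟶ X} {p : Y ⟶ X} (h : IsPullback q e p i) :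
    IsPullback (rhoMap J q) (rhoMap J e) (rhoMap J p) (rhoMap J i) :=
  h.map (rhoFunctor J)

/-- `ρ` of a monomorphism is element-wise injective. -/
lemma rho_app_injective {J : GrothendieckTopology C} {A X : C} (i : A ⟶ X) (hi : Mono i)
    (o : Cᵒᵖ) : Function.Injective ((rhoMap J i).hom.app o) := by
  intro a a' haa
  haveI := hi
  have h0 : IsPullback (𝟙 A) (𝟙 A) i i := IsKernelPair.id_of_mono i
  have h1 : IsPullback (𝟙 (rho J A)) (𝟙 (rho J A)) (rhoMap J i) (rhoMap J i) := by
    have h2 := h0.map (rhoFunctor J)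
    rwa [CategoryTheory.Functor.map_id] at h2
  obtain ⟨b, hb1, hb2⟩ := sheaf_isPullback_exists h1 o a a' haa
  rw [← hb1, ← hb2]

lemma elm {J : GrothendieckTopology C} {F G : Sheaf J (Type (max u v))} {f g : F ⟶ G}
    (h : f = g) (o : Cᵒᵖ) (x : F.val.obj o) : f.hom.app o x = g.hom.app o x := by rw [h]

lemma res_app {J : GrothendieckTopology C} {F G : Sheaf J (Type (max u v))} (f : F ⟶ G)
    {Z Z' : C} (g : Z' ⟶ Z) (x : F.val.obj (op Z)) :
    f.hom.app (op Z') (F.val.map g.op x) = G.val.map g.op (f.hom.app (op Z) x) :=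
  NatTrans.naturality_apply f.hom g.op x

lemma comp_app {J : GrothendieckTopology C} {F G H : Sheaf J (Type (max u v))}
    (f : F ⟶ G) (h : G ⟶ H) (o : Cᵒᵖ) (x : F.val.obj o) :
    (f ≫ h).hom.app o x = h.hom.app o (f.hom.app o x) := rfl

/-- If `k : U ⨿ V ⟶ K` is an epimorphism of sheaves of types, then every section of `K`
is locally in the image of `U` or of `V`. -/
lemma jointly_locallySurjective {J : GrothendieckTopology C}
    {U V K : Sheaf J (Type (max u v))} (k : U ⨿ V ⟶ K) (hk : Epi k) {Z : C}
    (s : K.val.obj (op Z)) :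
    (Presheaf.imageSieve (coprod.inl ≫ k).hom s ⊔ Presheaf.imageSieve (coprod.inr ≫ k).hom s)
      ∈ J Z := by
  let d' : (presheafToSheaf J _).obj (U.val ⨿ V.val) ⟶ K :=
    ((sheafificationAdjunction J _).homEquiv _ _).symm
      (coprod.desc (coprod.inl ≫ k).hom (coprod.inr ≫ k).hom)
  have hd0 := ((sheafificationAdjunction J (Type (max u v))).homEquiv
      (U.val ⨿ V.val) K).apply_symm_apply
      (coprod.desc (coprod.inl ≫ k).hom (coprod.inr ≫ k).hom)
  rw [Adjunction.homEquiv_unit] at hd0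
  have hd : toSheafify J (U.val ⨿ V.val) ≫ d'.hom
      = coprod.desc (coprod.inl ≫ k).hom (coprod.inr ≫ k).hom := hd0
  have hde : Epi d' := by
    constructor
    intro M α β hab
    have h1 : coprod.desc (coprod.inl ≫ k).hom (coprod.inr ≫ k).hom ≫ α.hom
        = coprod.desc (coprod.inl ≫ k).hom (coprod.inr ≫ k).hom ≫ β.hom := by
      have h2 := congrArg ((sheafificationAdjunction J (Type (max u v))).homEquiv
        (U.val ⨿ V.val) M) hab
      rwa [Adjunction.homEquiv_naturality_right, Adjunction.homEquiv_naturality_right,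
        Equiv.apply_symm_apply] at h2
    have h2l : coprod.inl ≫ k ≫ α = coprod.inl ≫ k ≫ β := by
      rw [← Category.assoc, ← Category.assoc]
      apply Sheaf.hom_ext
      have h3 := congrArg (fun t => coprod.inl ≫ t) h1
      rw [coprod.inl_desc_assoc, coprod.inl_desc_assoc] at h3
      exact h3
    have h2r : coprod.inr ≫ k ≫ α = coprod.inr ≫ k ≫ β := by
      rw [← Category.assoc, ← Category.assoc]
      apply Sheaf.hom_ext
      have h3 := congrArg (fun t => coprod.inr ≫ t) h1
      rw [coprod.inr_desc_assoc, coprod.inr_desc_assoc] at h3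
      exact h3
    have h4 : k ≫ α = k ≫ β := coprod.hom_ext h2l h2r
    exact (cancel_epi k).1 h4
  haveI : Sheaf.IsLocallySurjective d' := (Sheaf.isLocallySurjective_iff_epi d').2 hde
  have hls : Presheaf.IsLocallySurjective J
      (coprod.desc (coprod.inl ≫ k).hom (coprod.inr ≫ k).hom) := by
    rw [← hd]
    infer_instance
  haveI := hls
  refine J.superset_covering ?_
    (Presheaf.imageSieve_mem J
      (coprod.desc (coprod.inl ≫ k).hom (coprod.inr ≫ k).hom) s (U := op Z))
  intro Z' g hg
  obtain ⟨t, ht⟩ := hg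
  obtain ⟨j, y, hy⟩ := Types.jointly_surjective_of_isColimit
    (isColimitOfPreserves ((evaluation Cᵒᵖ (Type (max u v))).obj (op Z'))
      (colimit.isColimit (pair U.val V.val))) t
  obtain ⟨j⟩ := j
  cases j with
  | left =>
    refine Or.inl ⟨y, ?_⟩
    show (coprod.inl ≫ k).hom.app (op Z') y = K.val.map g.op s
    calc (coprod.inl ≫ k).hom.app (op Z') y
        = (coprod.desc (coprod.inl ≫ k).hom (coprod.inr ≫ k).hom).app (op Z')
            ((coprod.inl : U.val ⟶ U.val ⨿ V.val).app (op Z') y) :=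
          (ConcreteCategory.congr_hom (NatTrans.congr_app (coprod.inl_desc
            (coprod.inl ≫ k).hom (coprod.inr ≫ k).hom) (op Z')) y).symm
      _ = (coprod.desc (coprod.inl ≫ k).hom (coprod.inr ≫ k).hom).app (op Z') t := by
          rw [show (coprod.inl : U.val ⟶ U.val ⨿ V.val).app (op Z') y = t from hy]
      _ = K.val.map g.op s := ht
  | right =>
    refine Or.inr ⟨y, ?_⟩
    show (coprod.inr ≫ k).hom.app (op Z') y = K.val.map g.op s
    calc (coprod.inr ≫ k).hom.app (op Z') y
        = (coprod.desc (coprod.inl ≫ k).hom (coprod.inr ≫ k).hom).app (op Z')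
            ((coprod.inr : V.val ⟶ U.val ⨿ V.val).app (op Z') y) :=
          (ConcreteCategory.congr_hom (NatTrans.congr_app (coprod.inr_desc
            (coprod.inl ≫ k).hom (coprod.inr ≫ k).hom) (op Z')) y).symm
      _ = (coprod.desc (coprod.inl ≫ k).hom (coprod.inr ≫ k).hom).app (op Z') t := by
          rw [show (coprod.inr : V.val ⟶ U.val ⨿ V.val).app (op Z') y = t from hy]
      _ = K.val.map g.op s := ht

/-- Compatibility of the sheafification unit with `rhoMap`. -/
lemma toSheafify_rhoMap {J : GrothendieckTopology C} {A X : C} (i : A ⟶ X) {Z : C} (m : Z ⟶ A) :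
    (rhoMap J i).hom.app (op Z)
        ((toSheafify J (yoneda.obj A ⋙ uliftFunctor.{u})).app (op Z) ⟨m⟩)
      = (toSheafify J (yoneda.obj X ⋙ uliftFunctor.{u})).app (op Z) ⟨m ≫ i⟩ := by
  have h := toSheafify_naturality (J := J) (Functor.whiskerRight (yoneda.map i) uliftFunctor.{u})
  exact (ConcreteCategory.congr_hom (NatTrans.congr_app h (op Z)) _).symm

/-- A criterion for a sheaf morphism into `ρ(X)` to be locally surjective. -/
lemma isLocallySurjective_into_rho {J : GrothendieckTopology C} {X : C}
    {M : Sheaf J (Type (max u v))} (f : M ⟶ rho J X)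
    (h : ∀ {Z' : C} (t : Z' ⟶ X), ∃ cov : Sieve Z', cov ∈ J Z' ∧
      ∀ {Z'' : C} (u : Z'' ⟶ Z'), cov u → ∃ w : M.val.obj (op Z''),
        f.hom.app (op Z'') w
          = (toSheafify J (yoneda.obj X ⋙ uliftFunctor.{u})).app (op Z'') ⟨u ≫ t⟩) :
    Sheaf.IsLocallySurjective f := by
  constructor
  intro Z s
  refine J.transitive
    (Presheaf.imageSieve_mem J (toSheafify J (yoneda.obj X ⋙ uliftFunctor.{u})) s (U := op Z))
    _ ?_
  rintro Z' g ⟨t, ht⟩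
  obtain ⟨cov, hcov, hlift⟩ := h t.down
  refine J.superset_covering ?_ hcov
  intro Z'' u hu
  obtain ⟨w', hw⟩ := hlift u hu
  have ht0 : (toSheafify J (yoneda.obj X ⋙ uliftFunctor.{u})).app (op Z') t
      = ((presheafToSheaf J (Type (max u v))).obj
          (yoneda.obj X ⋙ uliftFunctor.{u})).val.map g.op s := ht
  refine ⟨w', ?_⟩
  show f.hom.app (op Z'') w' = (rho J X).val.map (u ≫ g).op s
  rw [hw]
  refine (NatTrans.naturality_apply (toSheafify J (yoneda.obj X ⋙ uliftFunctor.{u})) u.op t).trans ?_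
  rw [ht0, op_comp, FunctorToTypes.map_comp_apply]
  rfl

/-- The comparison map `ρ(A) ⊔_{ρ(B)} ρ(Y) ⟶ ρ(X)` is an epimorphism. -/
lemma epi_rho_desc (P : Set (CDSquare C)) {Q : CDSquare C} (hQ : Q ∈ P)
    (w : rhoMap (cTopology P) Q.e ≫ rhoMap (cTopology P) Q.i
       = rhoMap (cTopology P) Q.q ≫ rhoMap (cTopology P) Q.p) :
    Epi (pushout.desc (rhoMap (cTopology P) Q.i) (rhoMap (cTopology P) Q.p) w) := by
  haveI : Sheaf.IsLocallySurjective
      (pushout.desc (rhoMap (cTopology P) Q.i) (rhoMap (cTopology P) Q.p) w) := by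
    apply isLocallySurjective_into_rho
    intro Z' t
    refine ⟨Q.sieve.pullback t, (cTopology P).pullback_stable t (mem_cTopology P hQ), ?_⟩
    rintro Z'' u (⟨m, hm⟩ | ⟨m, hm⟩)
    · refine ⟨(pushout.inl (rhoMap (cTopology P) Q.e) (rhoMap (cTopology P) Q.q)).hom.app _
        ((toSheafify (cTopology P) (yoneda.obj Q.A ⋙ uliftFunctor.{u})).app (op Z'') ⟨m⟩), ?_⟩
      exact (elm (pushout.inl_desc _ _ w) _ _).trans ((toSheafify_rhoMap Q.i m).trans (by rw [hm]))
    · refine ⟨(pushout.inr (rhoMap (cTopology P) Q.e) (rhoMap (cTopology P) Q.q)).hom.app _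
        ((toSheafify (cTopology P) (yoneda.obj Q.Y ⋙ uliftFunctor.{u})).app (op Z'') ⟨m⟩), ?_⟩
      exact (elm (pushout.inr_desc _ _ w) _ _).trans ((toSheafify_rhoMap Q.p m).trans (by rw [hm]))
  infer_instance

/-- The comparison map `ρ(A) ⊔_{ρ(B)} ρ(Y) ⟶ ρ(X)` is a monomorphism. -/
lemma mono_rho_desc {J : GrothendieckTopology C} {Q : CDSquare C}
    (hpb : IsPullback Q.q Q.e Q.p Q.i) (hmono : Mono Q.i) (hepi : Epi (regCompare J Q))
    (w : rhoMap J Q.e ≫ rhoMap J Q.i = rhoMap J Q.q ≫ rhoMap J Q.p) :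
    Mono (pushout.desc (rhoMap J Q.i) (rhoMap J Q.p) w) := by
  -- basic compatibilities
  have hsq : IsPullback (rhoMap J Q.q) (rhoMap J Q.e) (rhoMap J Q.p) (rhoMap J Q.i) :=
    rho_map_isPullback hpb
  have hfacS : ∀ (o : Cᵒᵖ) (b : (rho J Q.A).val.obj o),
      (pushout.desc (rhoMap J Q.i) (rhoMap J Q.p) w).hom.app o
          ((pushout.inl (rhoMap J Q.e) (rhoMap J Q.q)).hom.app o b)
        = (rhoMap J Q.i).hom.app o b :=
    fun o b => elm (pushout.inl_desc (rhoMap J Q.i) (rhoMap J Q.p) w) o b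
  have hfacT : ∀ (o : Cᵒᵖ) (b : (rho J Q.Y).val.obj o),
      (pushout.desc (rhoMap J Q.i) (rhoMap J Q.p) w).hom.app o
          ((pushout.inr (rhoMap J Q.e) (rhoMap J Q.q)).hom.app o b)
        = (rhoMap J Q.p).hom.app o b :=
    fun o b => elm (pushout.inr_desc (rhoMap J Q.i) (rhoMap J Q.p) w) o b
  have hpocond : ∀ (o : Cᵒᵖ) (b : (rho J Q.B).val.obj o),
      (pushout.inl (rhoMap J Q.e) (rhoMap J Q.q)).hom.app o ((rhoMap J Q.e).hom.app o b)
        = (pushout.inr (rhoMap J Q.e) (rhoMap J Q.q)).hom.app o ((rhoMap J Q.q).hom.app o b) :=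
    fun o b => elm pushout.condition o b
  -- the canonical map from the coproduct onto the pushout is an epimorphism
  have hk : Epi (coprod.desc (pushout.inl (rhoMap J Q.e) (rhoMap J Q.q))
      (pushout.inr (rhoMap J Q.e) (rhoMap J Q.q))) := by
    constructor
    intro M α β hab
    apply pushout.hom_ext
    · have h1 := congrArg (fun t => coprod.inl ≫ t) hab
      rwa [coprod.inl_desc_assoc, coprod.inl_desc_assoc] at h1
    · have h1 := congrArg (fun t => coprod.inr ≫ t) hab
      rwa [coprod.inr_desc_assoc, coprod.inr_desc_assoc] at h1
  -- every section of the pushout locally comes from `ρ(A)` or `ρ(Y)`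
  have claimA : ∀ {Z : C} (x : (pushout (rhoMap J Q.e) (rhoMap J Q.q)).val.obj (op Z)),
      (Presheaf.imageSieve (pushout.inl (rhoMap J Q.e) (rhoMap J Q.q)).hom x
        ⊔ Presheaf.imageSieve (pushout.inr (rhoMap J Q.e) (rhoMap J Q.q)).hom x) ∈ J Z := by
    intro Z x
    have h := jointly_locallySurjective _ hk x
    rwa [coprod.inl_desc, coprod.inr_desc] at h
  -- structure of the regularity comparison map
  have e1 : coprod.inl ≫ regCompare J Q
      = pullback.lift (𝟙 (rho J Q.Y)) (𝟙 (rho J Q.Y)) rfl := coprod.inl_desc _ _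
  have e2 : coprod.inr ≫ regCompare J Q
      = pullback.lift (pullback.fst (rhoMap J Q.e) (rhoMap J Q.e) ≫ rhoMap J Q.q)
          (pullback.snd (rhoMap J Q.e) (rhoMap J Q.e) ≫ rhoMap J Q.q)
          (by
            rw [Category.assoc, Category.assoc, ← rhoMap_comp, Q.w, rhoMap_comp,
              ← Category.assoc, ← Category.assoc, pullback.condition]) := coprod.inr_desc _ _
  have e1f : (coprod.inl ≫ regCompare J Q) ≫ pullback.fst (rhoMap J Q.p) (rhoMap J Q.p)
      = 𝟙 (rho J Q.Y) := by rw [e1, pullback.lift_fst]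
  have e1s : (coprod.inl ≫ regCompare J Q) ≫ pullback.snd (rhoMap J Q.p) (rhoMap J Q.p)
      = 𝟙 (rho J Q.Y) := by rw [e1, pullback.lift_snd]
  have e2f : (coprod.inr ≫ regCompare J Q) ≫ pullback.fst (rhoMap J Q.p) (rhoMap J Q.p)
      = pullback.fst (rhoMap J Q.e) (rhoMap J Q.e) ≫ rhoMap J Q.q := by
    rw [e2, pullback.lift_fst]
  have e2s : (coprod.inr ≫ regCompare J Q) ≫ pullback.snd (rhoMap J Q.p) (rhoMap J Q.p)
      = pullback.snd (rhoMap J Q.e) (rhoMap J Q.e) ≫ rhoMap J Q.q := by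
    rw [e2, pullback.lift_snd]
  -- now prove that the map is an objectwise injective
  haveI hinj : ∀ o : Cᵒᵖ, Mono ((pushout.desc (rhoMap J Q.i) (rhoMap J Q.p) w).hom.app o) := by
    intro o
    obtain ⟨Z⟩ := o
    rw [mono_iff_injective]
    intro x y hxy
    have hφ : ∀ {Z' : C} (g : Z' ⟶ Z),
        (pushout.desc (rhoMap J Q.i) (rhoMap J Q.p) w).hom.app (op Z')
            ((pushout (rhoMap J Q.e) (rhoMap J Q.q)).val.map g.op x)
          = (pushout.desc (rhoMap J Q.i) (rhoMap J Q.p) w).hom.app (op Z')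
            ((pushout (rhoMap J Q.e) (rhoMap J Q.q)).val.map g.op y) := by
      intro Z' g
      rw [res_app, res_app, hxy]
    apply (Presieve.IsSheaf.isSeparated
      ((isSheaf_iff_isSheaf_of_type J _).1 (pushout (rhoMap J Q.e) (rhoMap J Q.q)).cond) _
      (J.intersection_covering (claimA x) (claimA y))).ext
    rintro Z' g ⟨hgx, hgy⟩
    rcases hgx with ⟨a, ha⟩ | ⟨t, ht⟩ <;> rcases hgy with ⟨a', ha'⟩ | ⟨t', ht'⟩
    · -- both restrictions come from ρ(A)
      have ha0 : (pushout.inl (rhoMap J Q.e) (rhoMap J Q.q)).hom.app (op Z') a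
          = (pushout (rhoMap J Q.e) (rhoMap J Q.q)).val.map g.op x := ha
      have ha'0 : (pushout.inl (rhoMap J Q.e) (rhoMap J Q.q)).hom.app (op Z') a'
          = (pushout (rhoMap J Q.e) (rhoMap J Q.q)).val.map g.op y := ha'
      have haa : a = a' := by
        apply rho_app_injective Q.i hmono (op Z')
        rw [← hfacS (op Z') a, ← hfacS (op Z') a', ha0, ha'0]
        exact hφ g
      rw [← ha0, ← ha'0, haa]
    · -- x from ρ(A), y from ρ(Y)
      have ha0 : (pushout.inl (rhoMap J Q.e) (rhoMap J Q.q)).hom.app (op Z') a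
          = (pushout (rhoMap J Q.e) (rhoMap J Q.q)).val.map g.op x := ha
      have ht'0 : (pushout.inr (rhoMap J Q.e) (rhoMap J Q.q)).hom.app (op Z') t'
          = (pushout (rhoMap J Q.e) (rhoMap J Q.q)).val.map g.op y := ht'
      have hit : (rhoMap J Q.p).hom.app (op Z') t' = (rhoMap J Q.i).hom.app (op Z') a := by
        rw [← hfacS (op Z') a, ← hfacT (op Z') t', ha0, ht'0]
        exact (hφ g).symm
      obtain ⟨b, hb1, hb2⟩ := sheaf_isPullback_exists hsq (op Z') t' a hit
      rw [← ha0, ← ht'0, ← hb1, ← hb2]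
      exact hpocond (op Z') b
    · -- x from ρ(Y), y from ρ(A)
      have ht0 : (pushout.inr (rhoMap J Q.e) (rhoMap J Q.q)).hom.app (op Z') t
          = (pushout (rhoMap J Q.e) (rhoMap J Q.q)).val.map g.op x := ht
      have ha'0 : (pushout.inl (rhoMap J Q.e) (rhoMap J Q.q)).hom.app (op Z') a'
          = (pushout (rhoMap J Q.e) (rhoMap J Q.q)).val.map g.op y := ha'
      have hit : (rhoMap J Q.p).hom.app (op Z') t = (rhoMap J Q.i).hom.app (op Z') a' := by
        rw [← hfacS (op Z') a', ← hfacT (op Z') t, ht0, ha'0]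
        exact hφ g
      obtain ⟨b, hb1, hb2⟩ := sheaf_isPullback_exists hsq (op Z') t a' hit
      rw [← ht0, ← ha'0, ← hb1, ← hb2]
      exact (hpocond (op Z') b).symm
    · -- both from ρ(Y): use the regularity assumption
      have ht0 : (pushout.inr (rhoMap J Q.e) (rhoMap J Q.q)).hom.app (op Z') t
          = (pushout (rhoMap J Q.e) (rhoMap J Q.q)).val.map g.op x := ht
      have ht'0 : (pushout.inr (rhoMap J Q.e) (rhoMap J Q.q)).hom.app (op Z') t'
          = (pushout (rhoMap J Q.e) (rhoMap J Q.q)).val.map g.op y := ht'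
      have hpp : (rhoMap J Q.p).hom.app (op Z') t = (rhoMap J Q.p).hom.app (op Z') t' := by
        rw [← hfacT (op Z') t, ← hfacT (op Z') t', ht0, ht'0]
        exact hφ g
      obtain ⟨ζ, hζ1, hζ2⟩ := sheaf_isPullback_exists
        (IsPullback.of_hasPullback (rhoMap J Q.p) (rhoMap J Q.p)) (op Z') t t' hpp
      apply (Presieve.IsSheaf.isSeparated
        ((isSheaf_iff_isSheaf_of_type J _).1 (pushout (rhoMap J Q.e) (rhoMap J Q.q)).cond) _
        (jointly_locallySurjective (regCompare J Q) hepi ζ)).ext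
      rintro Z'' g' (⟨v, hv⟩ | ⟨v, hv⟩)
      · -- diagonal part of the regularity comparison
        have hv0 : (coprod.inl ≫ regCompare J Q).hom.app (op Z'') v
            = (pullback (rhoMap J Q.p) (rhoMap J Q.p)).val.map g'.op ζ := hv
        rw [← ht0, ← ht'0, ← res_app, ← res_app, ← hζ1, ← hζ2, ← res_app, ← res_app, ← hv0]
        have hvv := (elm e1f (op Z'') v).trans (elm e1s (op Z'') v).symm
        simp only [comp_app] at hvv
        simp only [comp_app]
        rw [hvv]
      · -- ρ(B) ×_{ρ(A)} ρ(B) part of the regularity comparison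
        have hv0 : (coprod.inr ≫ regCompare J Q).hom.app (op Z'') v
            = (pullback (rhoMap J Q.p) (rhoMap J Q.p)).val.map g'.op ζ := hv
        rw [← ht0, ← ht'0, ← res_app, ← res_app, ← hζ1, ← hζ2, ← res_app, ← res_app, ← hv0]
        have h1 := elm e2f (op Z'') v
        have h2 := elm e2s (op Z'') v
        simp only [comp_app] at h1 h2
        simp only [comp_app]
        rw [h1, h2]
        have hw : (rhoMap J Q.e).hom.app (op Z'')
            ((pullback.fst (rhoMap J Q.e) (rhoMap J Q.e)).hom.app (op Z'') v)
            = (rhoMap J Q.e).hom.app (op Z'')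
              ((pullback.snd (rhoMap J Q.e) (rhoMap J Q.e)).hom.app (op Z'') v) :=
          elm pullback.condition (op Z'') v
        rw [← hpocond (op Z'') ((pullback.fst (rhoMap J Q.e) (rhoMap J Q.e)).hom.app (op Z'') v),
          ← hpocond (op Z'') ((pullback.snd (rhoMap J Q.e) (rhoMap J Q.e)).hom.app (op Z'') v),
          hw]
  have hval : Mono ((sheafToPresheaf J _).map (pushout.desc (rhoMap J Q.i) (rhoMap J Q.p) w)) := by
    haveI : ∀ X : Cᵒᵖ, Mono (((sheafToPresheaf J (Type (max u v))).map
        (pushout.desc (rhoMap J Q.i) (rhoMap J Q.p) w)).app X) := hinj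
    exact NatTrans.mono_of_mono_app _
  exact (sheafToPresheaf J _).mono_of_mono_map hval

end Auxiliary

/-- For a c-regular cd-structure `P`, the natural morphism
`ρ(A) ⊔_{ρ(B)} ρ(Y) ⟶ ρ(X)` associated to a distinguished square is an isomorphism
of sheaves of sets for the associated c-topology. -/
theorem rho_pushout_isIso
    {C : Type u} [Category.{v} C] (P : Set (CDSquare C)) (hP : IsCRegular P)
    (Q : CDSquare C) (hQ : Q ∈ P) :
    IsIso (pushout.desc (f := rhoMap (cTopology P) Q.e) (g := rhoMap (cTopology P) Q.q)
      (rhoMap (cTopology P) Q.i) (rhoMap (cTopology P) Q.p)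
      (by rw [← rhoMap_comp, ← rhoMap_comp, Q.w])) := by
  obtain ⟨hpb, hmono, hepi⟩ := hP Q hQ
  haveI := mono_rho_desc hpb hmono hepi
    (by rw [← rhoMap_comp, ← rhoMap_comp, Q.w] :
      rhoMap (cTopology P) Q.e ≫ rhoMap (cTopology P) Q.i
        = rhoMap (cTopology P) Q.q ≫ rhoMap (cTopology P) Q.p)
  haveI := epi_rho_desc P hQ
    (by rw [← rhoMap_comp, ← rhoMap_comp, Q.w] :
      rhoMap (cTopology P) Q.e ≫ rhoMap (cTopology P) Q.i
        = rhoMap (cTopology P) Q.q ≫ rhoMap (cTopology P) Q.p)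
  exact isIso_of_mono_of_epi _

end CdFormal
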